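/- Let h be an even function on ℝ^d∖{0}, homogeneous of degree 0 and Lipschitz of order α ∈ (0,1] on the sphere. Then there exists C > 0 such that for all p ∈ ℝ with p ≠ 0 and all γ ∈ ℝ^{d−1}, |h(θ0) ln|p| − (1/2) h(γ, p) ln(|γ|² + p²)| ≤ C (min((|γ|/|p|)^α, 1) · |ln|p|| + |γ|²/p²). -/

import Mathlib

open MeasureTheory Filter

noncomputable section

/-- The point `(γ, p) ∈ ℝ^{m+1}` with `γ ∈ ℝ^m` and last coordinate `p`. -/
def app {m : ℕ} (γ : EuclideanSpace ℝ (Fin m)) (p : ℝ) :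
    EuclideanSpace ℝ (Fin (m + 1)) :=
  WithLp.toLp 2 (Fin.snoc (α := fun _ => ℝ) (WithLp.ofLp γ) p)

/-- The direction `θ₀ = (0, …, 0, 1) ∈ ℝ^{m+1}`. -/
def theta0 (m : ℕ) : EuclideanSpace ℝ (Fin (m + 1)) := app 0 1

/-- `g` is homogeneous of degree `0` on `ℝ^n ∖ {0}`. -/
def Homog0 {n : ℕ} (g : EuclideanSpace ℝ (Fin n) → ℝ) : Prop :=
  ∀ t : ℝ, 0 < t → ∀ ξ : EuclideanSpace ℝ (Fin n), ξ ≠ 0 → g (t • ξ) = g ξ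

/-- `g` is even. -/
def EvenFn {n : ℕ} (g : EuclideanSpace ℝ (Fin n) → ℝ) : Prop :=
  ∀ ξ : EuclideanSpace ℝ (Fin n), g (-ξ) = g ξ

/-- `g` is Lipschitz of order `α` on the unit sphere. -/
def LipSphere {n : ℕ} (g : EuclideanSpace ℝ (Fin n) → ℝ) (α : ℝ) : Prop :=
  ∃ L > (0 : ℝ), ∀ x y : EuclideanSpace ℝ (Fin n), ‖x‖ = 1 → ‖y‖ = 1 →
    |g x - g y| ≤ L * ‖x - y‖ ^ α

/-- `ρ` is rapidly decreasing. -/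
def RapidDecay {n : ℕ} (ρ : EuclideanSpace ℝ (Fin n) → ℝ) : Prop :=
  ∀ k : ℕ, ∃ C > (0 : ℝ), ∀ x : EuclideanSpace ℝ (Fin n),
    |ρ x| ≤ C * (1 + ‖x‖) ^ (-(k : ℝ))

lemma esp_norm_sq {n : ℕ} (x : EuclideanSpace ℝ (Fin n)) : ‖x‖ ^ 2 = ∑ i, x i ^ 2 := by
  rw [EuclideanSpace.norm_eq, Real.sq_sqrt (by positivity)]
  simp [sq_abs]

lemma app_smul {m : ℕ} (c : ℝ) (γ : EuclideanSpace ℝ (Fin m)) (p : ℝ) :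
    c • app γ p = app (c • γ) (c * p) := by
  ext i
  refine Fin.lastCases ?_ ?_ i
  · simp [app, PiLp.smul_apply]
  · intro j; simp [app, PiLp.smul_apply]

lemma app_sub {m : ℕ} (γ γ' : EuclideanSpace ℝ (Fin m)) (p p' : ℝ) :
    app γ p - app γ' p' = app (γ - γ') (p - p') := by
  ext i
  refine Fin.lastCases ?_ ?_ i
  · simp [app, PiLp.sub_apply]
  · intro j; simp [app, PiLp.sub_apply]

lemma norm_app_sq {m : ℕ} (γ : EuclideanSpace ℝ (Fin m)) (p : ℝ) :
    ‖app γ p‖ ^ 2 = ‖γ‖ ^ 2 + p ^ 2 := by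
  rw [esp_norm_sq, esp_norm_sq, Fin.sum_univ_castSucc]
  simp [app]

lemma min_rpow (x α : ℝ) (hx : 0 ≤ x) (hα : 0 ≤ α) :
    (min x 1) ^ α = min (x ^ α) 1 := by
  rcases le_total x 1 with hc | hc
  · rw [min_eq_left hc, min_eq_left (Real.rpow_le_one hx hc hα)]
  · rw [min_eq_right hc, Real.one_rpow,
      min_eq_right (by simpa using Real.rpow_le_rpow zero_le_one hc hα)]

set_option maxHeartbeats 1000000 in
theorem statement16 (m : ℕ) (hm : 1 ≤ m) (α : ℝ) (hα : 0 < α) (hα1 : α ≤ 1)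
    (h : EuclideanSpace ℝ (Fin (m + 1)) → ℝ)
    (hheven : EvenFn h) (hhhom : Homog0 h) (hhlip : LipSphere h α) :
    ∃ C > (0 : ℝ), ∀ p : ℝ, p ≠ 0 → ∀ γ : EuclideanSpace ℝ (Fin m),
      abs (h (theta0 m) * Real.log (abs p) -
          (1 / 2) * h (app γ p) * Real.log (‖γ‖ ^ 2 + p ^ 2)) ≤
        C * (min ((‖γ‖ / abs p) ^ α) 1 * abs (Real.log (abs p)) +
          ‖γ‖ ^ 2 / p ^ 2) := by
  obtain ⟨L, hL, hlip⟩ := hhlip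
  have hθ : ‖theta0 m‖ = 1 := by
    have h2 : ‖theta0 m‖ ^ 2 = ‖(0 : EuclideanSpace ℝ (Fin m))‖ ^ 2 + (1:ℝ) ^ 2 :=
      norm_app_sq 0 1
    simp only [norm_zero] at h2
    nlinarith [norm_nonneg (theta0 m)]
  set M : ℝ := |h (theta0 m)| + 2 * L with hM
  have hM0 : 0 ≤ M := by positivity
  refine ⟨2 * L + M + 1, by positivity, ?_⟩
  intro p hp γ
  set r : ℝ := ‖γ‖ with hrdef
  have hr : 0 ≤ r := norm_nonneg γ
  set s : ℝ := ‖app γ p‖ with hsdef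
  have hs2 : s ^ 2 = r ^ 2 + p ^ 2 := norm_app_sq γ p
  have hap : 0 < |p| := abs_pos.mpr hp
  have hs0 : 0 ≤ s := norm_nonneg _
  have hsp : |p| ≤ s := by nlinarith [sq_abs p]
  have hs : 0 < s := lt_of_lt_of_le hap hsp
  -- sign
  set ε : ℝ := if 0 < p then 1 else -1 with hεdef
  have hεp : ε * p = |p| := by
    rcases hp.lt_or_gt with hneg | hpos
    · rw [hεdef, if_neg (not_lt.mpr hneg.le), abs_of_neg hneg]; ring
    · rw [hεdef, if_pos hpos, abs_of_pos hpos]; ring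
  have hε1 : |ε| = 1 := by
    rcases hp.lt_or_gt with hneg | hpos
    · rw [hεdef, if_neg (not_lt.mpr hneg.le)]; norm_num
    · rw [hεdef, if_pos hpos]; norm_num
  -- unit vectors
  set u : EuclideanSpace ℝ (Fin (m+1)) := s⁻¹ • app γ p with hudef
  have hnu : ‖u‖ = 1 := by
    rw [hudef, norm_smul, norm_inv, Real.norm_eq_abs, abs_of_pos hs, ← hsdef]
    field_simp
  set e : EuclideanSpace ℝ (Fin (m+1)) := ε • theta0 m with hedef
  have hne : ‖e‖ = 1 := by
    rw [hedef, norm_smul, Real.norm_eq_abs, hε1, hθ, one_mul]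
  have happ_ne : app γ p ≠ 0 := by
    intro h0
    have hsz : s = 0 := by rw [hsdef, h0, norm_zero]
    exact hs.ne' hsz
  have hhu : h u = h (app γ p) := hhhom s⁻¹ (inv_pos.mpr hs) _ happ_ne
  have hhe : h e = h (theta0 m) := by
    rcases hp.lt_or_gt with hneg | hpos
    · have : e = -(theta0 m) := by
        rw [hedef, hεdef, if_neg (not_lt.mpr hneg.le)]
        module
      rw [this, hheven]
    · rw [hedef, hεdef, if_pos hpos, one_smul]
  -- distance computation
  have hε2 : ε ^ 2 = 1 := by
    rcases hp.lt_or_gt with hneg | hpos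
    · rw [hεdef, if_neg (not_lt.mpr hneg.le)]; norm_num
    · rw [hεdef, if_pos hpos]; norm_num
  have hue2 : ‖u - e‖ ^ 2 = 2 - 2 * |p| / s := by
    have h1 : u - e = app (s⁻¹ • γ - ε • (0 : EuclideanSpace ℝ (Fin m))) (s⁻¹ * p - ε * 1) := by
      rw [hudef, hedef, theta0, app_smul, app_smul, app_sub]
    rw [h1, norm_app_sq]
    have h2 : ‖s⁻¹ • γ - ε • (0 : EuclideanSpace ℝ (Fin m))‖ = s⁻¹ * r := by
      rw [smul_zero, sub_zero, norm_smul, norm_inv, Real.norm_eq_abs, abs_of_pos hs, ← hrdef]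
    rw [h2]
    field_simp
    linear_combination (-1) * hs2 + s ^ 2 * hε2 + (-2 * s) * hεp
  have hue_le2 : ‖u - e‖ ≤ 2 := by
    calc ‖u - e‖ ≤ ‖u‖ + ‖e‖ := norm_sub_le _ _
    _ = 2 := by rw [hnu, hne]; norm_num
  have hue_sq_le : ‖u - e‖ ^ 2 ≤ (r / |p|) ^ 2 := by
    rw [hue2, div_pow, sub_le_iff_le_add,
      div_add_div _ _ (ne_of_gt (pow_pos hap 2)) hs.ne', le_div_iff₀ (by positivity)]
    have key : 2 * |p| ^ 2 ≤ s * (s + |p|) := by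
      nlinarith [mul_le_mul hsp hsp (abs_nonneg p) hs0,
        mul_le_mul_of_nonneg_right hsp (abs_nonneg p)]
    have hs2a : s ^ 3 = r ^ 2 * s + |p| ^ 2 * s := by
      linear_combination s * hs2 - s * sq_abs p
    have H : (0:ℝ) ≤ s ^ 3 - 3 * |p| ^ 2 * s + 2 * |p| ^ 3 := by
      have h9 := mul_nonneg (sub_nonneg.2 hsp) (sub_nonneg.2 key)
      nlinarith [h9]
    nlinarith [H, hs2a]
  have hue_le1 : ‖u - e‖ ≤ r / |p| := by
    have h1 := Real.sqrt_le_sqrt hue_sq_le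
    rwa [Real.sqrt_sq (norm_nonneg _), Real.sqrt_sq (div_nonneg hr hap.le)] at h1
  have hx0 : 0 ≤ r / |p| := div_nonneg hr hap.le
  have hue_min : ‖u - e‖ ≤ 2 * min (r / |p|) 1 := by
    rcases le_total (r / |p|) 1 with hc | hc
    · rw [min_eq_left hc]; linarith [hue_le1, norm_nonneg (u - e)]
    · rw [min_eq_right hc]; linarith [hue_le2]
  -- Hoelder bounds
  set A : ℝ := min ((r / |p|) ^ α) 1 with hA
  have hA0 : 0 ≤ A := le_min (Real.rpow_nonneg hx0 α) zero_le_one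
  have hpow2 : (2 : ℝ) ^ α ≤ 2 := by
    calc (2 : ℝ) ^ α ≤ (2 : ℝ) ^ (1 : ℝ) :=
        Real.rpow_le_rpow_of_exponent_le one_le_two hα1
    _ = 2 := Real.rpow_one 2
  have hkey1 : |h u - h e| ≤ 2 * L * A := by
    have h1 : |h u - h e| ≤ L * ‖u - e‖ ^ α := hlip u e hnu hne
    have h2 : ‖u - e‖ ^ α ≤ (2 * min (r / |p|) 1) ^ α :=
      Real.rpow_le_rpow (norm_nonneg _) hue_min hα.le
    have h3 : (2 * min (r / |p|) 1) ^ α = 2 ^ α * (min (r / |p|) 1) ^ α :=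
      Real.mul_rpow (by norm_num) (le_min hx0 zero_le_one)
    have h4 : (min (r / |p|) 1) ^ α = A := by rw [min_rpow _ _ hx0 hα.le, hA]
    have h5 : (2 : ℝ) ^ α * (min (r / |p|) 1) ^ α ≤ 2 * A := by
      rw [h4]
      exact mul_le_mul_of_nonneg_right hpow2 hA0
    calc |h u - h e| ≤ L * ‖u - e‖ ^ α := h1
    _ ≤ L * (2 * A) := by
        apply mul_le_mul_of_nonneg_left _ hL.le
        rw [← h3] at h5
        exact le_trans h2 h5
    _ = 2 * L * A := by ring
  have hkey2 : |h u| ≤ M := by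
    have h1 : |h u - h e| ≤ L * ‖u - e‖ ^ α := hlip u e hnu hne
    have h2 : ‖u - e‖ ^ α ≤ 2 := by
      calc ‖u - e‖ ^ α ≤ (2 : ℝ) ^ α :=
          Real.rpow_le_rpow (norm_nonneg _) hue_le2 hα.le
      _ ≤ 2 := hpow2
    have h3 : |h u - h e| ≤ 2 * L := by
      calc |h u - h e| ≤ L * ‖u - e‖ ^ α := h1
      _ ≤ L * 2 := mul_le_mul_of_nonneg_left h2 hL.le
      _ = 2 * L := by ring
    calc |h u| = |h e + (h u - h e)| := by ring_nf
    _ ≤ |h e| + |h u - h e| := abs_add_le _ _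
    _ ≤ |h (theta0 m)| + 2 * L := by rw [hhe] at h3 ⊢; linarith
    _ = M := hM.symm
  -- logarithm manipulation
  set B : ℝ := r ^ 2 / p ^ 2 with hB
  have hB0 : 0 ≤ B := by positivity
  set lq : ℝ := Real.log (1 + B) with hlq
  have hlq0 : 0 ≤ lq := Real.log_nonneg (by linarith)
  have hlqB : lq ≤ B := by
    have := Real.log_le_sub_one_of_pos (show (0:ℝ) < 1 + B by linarith)
    linarith
  have hls : Real.log s = Real.log |p| + (1 / 2) * lq := by
    have hsq : (1 : ℝ) + B = s ^ 2 / p ^ 2 := by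
      rw [hB]
      field_simp
      linarith [hs2]
    have h1 : lq = Real.log (s ^ 2) - Real.log (p ^ 2) := by
      rw [hlq, hsq, Real.log_div (by positivity) (by positivity)]
    have h2 : Real.log (s ^ 2) = 2 * Real.log s := by
      rw [Real.log_pow]; push_cast; ring
    have h3 : Real.log (p ^ 2) = 2 * Real.log |p| := by
      rw [Real.log_pow, Real.log_abs]; push_cast; ring
    rw [h1, h2, h3]; ring
  have hlogrp : Real.log (r ^ 2 + p ^ 2) = 2 * Real.log s := by
    rw [← hs2, Real.log_pow]; push_cast; ring
  -- put it together
  set lp : ℝ := Real.log |p| with hlp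
  have hmain : h (theta0 m) * lp - (1 / 2) * h (app γ p) * Real.log (r ^ 2 + p ^ 2)
      = (h e - h u) * lp - (1 / 2) * h u * lq := by
    rw [hlogrp, hls, hhu, hhe]; ring
  rw [hmain]
  calc |(h e - h u) * lp - (1 / 2) * h u * lq|
      ≤ |(h e - h u) * lp| + |(1 / 2) * h u * lq| := abs_sub _ _
    _ = |h u - h e| * |lp| + (1 / 2) * |h u| * lq := by
        rw [abs_mul, abs_mul, abs_mul, abs_sub_comm, abs_of_nonneg hlq0]
        norm_num
    _ ≤ (2 * L * A) * |lp| + (1 / 2) * M * B := by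
        have t1 : |h u - h e| * |lp| ≤ (2 * L * A) * |lp| :=
          mul_le_mul_of_nonneg_right hkey1 (abs_nonneg _)
        have t2 : (1 / 2) * |h u| * lq ≤ (1 / 2) * M * B := by
          apply mul_le_mul (by linarith [hkey2]) hlqB hlq0
          positivity
        linarith
    _ ≤ (2 * L + M + 1) * (A * |lp| + B) := by
        have hAlp : 0 ≤ A * |lp| := mul_nonneg hA0 (abs_nonneg _)
        have e1 : (2 * L * A) * |lp| ≤ (2 * L + M + 1) * (A * |lp|) := by
          calc (2 * L * A) * |lp| = (2 * L) * (A * |lp|) := by ring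
          _ ≤ (2 * L + M + 1) * (A * |lp|) :=
              mul_le_mul_of_nonneg_right (by linarith) hAlp
        have e2 : (1 / 2) * M * B ≤ (2 * L + M + 1) * B :=
          mul_le_mul_of_nonneg_right (by linarith) hB0
        calc (2 * L * A) * |lp| + (1 / 2) * M * B
            ≤ (2 * L + M + 1) * (A * |lp|) + (2 * L + M + 1) * B := add_le_add e1 e2
          _ = (2 * L + M + 1) * (A * |lp| + B) := by ring
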